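/- Let X, Y be real Hilbert spaces, K ⊆ X a nonempty closed convex cone, A : X → X strongly monotone (constant m_A) and Lipschitz, B : X → X Lipschitz, u₀ ∈ X, f ∈ C([0,T];X), R : C([0,T];X) → C([0,T];Y) and S : C([0,T];X) → C([0,T];X) history-dependent operators, and j : Y × K → ℝ satisfying: j(η,·) convex, positively homogeneous, Lipschitz for all η ∈ Y, and j(η₁,v₂)-j(η₁,v₁)+j(η₂,v₁)-j(η₂,v₂) ≤ α_j ∥η₁-η₂∥_Y ∥v₁-v₂∥_X. Then there exists a unique u ∈ C¹([0,T];X) with u(0) = u₀, u̇(t) ∈ K for all t, and j(Ru̇(t), v) - j(Ru̇(t), u̇(t)) ≥ ⟨f(t) - Au̇(t) - Bu(t) - Su̇(t), v - u̇(t)⟩ for all v ∈ K and t ∈ [0,T]. -/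

import Mathlib

open RealInnerProductSpace
open Filter intervalIntegral

theorem aux_prox {X : Type*} [NormedAddCommGroup X] [InnerProductSpace ℝ X] [CompleteSpace X]
    {K : Set X} (hKne : K.Nonempty) (hKcl : IsClosed K) (hKcv : Convex ℝ K)
    {g : X → ℝ} (hgconv : ConvexOn ℝ K g)
    (hglip : ∃ L : ℝ, ∀ v ∈ K, ∀ w ∈ K, |g v - g w| ≤ L * ‖v - w‖) (x : X) :
    ∃ p ∈ K, ∀ v ∈ K, ⟪x - p, v - p⟫ ≤ g v - g p := by
  obtain ⟨L, hL⟩ := hglip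
  obtain ⟨v₀, hv₀⟩ := hKne
  set F : X → ℝ := fun v => (1/2) * ‖v - x‖^2 + g v with hF
  have hbdd : ∀ v ∈ K, g v₀ - |L| * ‖x - v₀‖ - L^2/2 ≤ F v := by
    intro v hv
    have h1 : |g v - g v₀| ≤ L * ‖v - v₀‖ := hL v hv v₀ hv₀
    have h1' : g v₀ - g v ≤ |L| * ‖v - v₀‖ := by
      have := abs_le.mp h1
      have h2 : L * ‖v - v₀‖ ≤ |L| * ‖v - v₀‖ :=
        mul_le_mul_of_nonneg_right (le_abs_self L) (norm_nonneg _)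
      linarith [this.1]
    have h2 : ‖v - v₀‖ ≤ ‖v - x‖ + ‖x - v₀‖ := by
      have := dist_triangle v x v₀
      simpa [dist_eq_norm] using this
    have h3 := mul_le_mul_of_nonneg_left h2 (abs_nonneg L)
    have h4 := sq_abs L
    have hFv : F v = 1/2 * ‖v - x‖^2 + g v := rfl
    nlinarith [sq_nonneg (‖v - x‖ - |L|)]
  -- the infimum
  have hSne : (F '' K).Nonempty := ⟨F v₀, v₀, hv₀, rfl⟩
  have hSbd : BddBelow (F '' K) := ⟨g v₀ - |L| * ‖x - v₀‖ - L^2/2, by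
    rintro y ⟨v, hv, rfl⟩; exact hbdd v hv⟩
  set d := sInf (F '' K) with hd
  have hdle : ∀ v ∈ K, d ≤ F v := fun v hv => csInf_le hSbd ⟨v, hv, rfl⟩
  -- minimizing sequence
  have hseq : ∀ n : ℕ, ∃ v ∈ K, F v < d + 1/(n+1) := by
    intro n
    have hlt : d < d + 1/(n+1) := by
      have : (0:ℝ) < 1/(n+1) := by positivity
      linarith
    obtain ⟨y, ⟨v, hv, rfl⟩, hy⟩ := exists_lt_of_csInf_lt hSne hlt
    exact ⟨v, hv, hy⟩
  choose u huK huF using hseq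
  -- strong convexity
  have hsc : ∀ v ∈ K, ∀ w ∈ K, ‖v - w‖^2 ≤ 8 * ((F v)/2 + (F w)/2 - d) := by
    intro v hv w hw
    have hmidK : (2⁻¹:ℝ) • v + (2⁻¹:ℝ) • w ∈ K :=
      hKcv hv hw (by norm_num) (by norm_num) (by norm_num)
    have hgmid : g ((2⁻¹:ℝ) • v + (2⁻¹:ℝ) • w) ≤ 2⁻¹ * g v + 2⁻¹ * g w :=
      hgconv.2 hv hw (by norm_num) (by norm_num) (by norm_num)
    have hdm : d ≤ F ((2⁻¹:ℝ) • v + (2⁻¹:ℝ) • w) := hdle _ hmidK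
    have hab : ((2⁻¹:ℝ) • v + (2⁻¹:ℝ) • w) - x = (2⁻¹:ℝ) • ((v - x) + (w - x)) := by
      module
    have hmx : ‖((2⁻¹:ℝ) • v + (2⁻¹:ℝ) • w) - x‖ = 2⁻¹ * ‖(v - x) + (w - x)‖ := by
      rw [hab, norm_smul]; norm_num
    have hpar := parallelogram_law_with_norm ℝ (v - x) (w - x)
    have hvw : (v - x) - (w - x) = v - w := by abel
    rw [hvw] at hpar
    have hFm : F ((2⁻¹:ℝ) • v + (2⁻¹:ℝ) • w)
        = (1/2) * (2⁻¹ * ‖(v - x) + (w - x)‖)^2 + g ((2⁻¹:ℝ) • v + (2⁻¹:ℝ) • w) := by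
      rw [hF]; dsimp only; rw [hmx]
    have hpar' : ‖v - x + (w - x)‖^2 + ‖v - w‖^2 = 2*(‖v - x‖^2 + ‖w - x‖^2) := by
      ring_nf; ring_nf at hpar; linarith
    have hFv : F v = 1/2 * ‖v - x‖^2 + g v := rfl
    have hFw : F w = 1/2 * ‖w - x‖^2 + g w := rfl
    nlinarith [norm_nonneg ((v-x) + (w-x)), norm_nonneg (v - w)]
  -- Cauchy
  have hN : ∀ N n : ℕ, N ≤ n → (1:ℝ)/(n+1) ≤ 1/(N+1) := by
    intro N n h
    apply one_div_le_one_div_of_le (by positivity)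
    have : (N:ℝ) ≤ n := Nat.cast_le.mpr h
    linarith
  have hcauchy : CauchySeq u := by
    refine cauchySeq_of_le_tendsto_0 (fun N => Real.sqrt (8 * (1/(N+1)))) (fun n m N hn hm => ?_) ?_
    · have h1 := hsc (u n) (huK n) (u m) (huK m)
      have h2 := huF n
      have h3 := huF m
      have h4 : ‖u n - u m‖^2 ≤ 8 * (1/(N+1)) := by
        have := hN N n hn
        have := hN N m hm
        nlinarith
      rw [dist_eq_norm]
      exact (Real.le_sqrt (norm_nonneg _) (by positivity)).mpr h4
    · have h8 : Filter.Tendsto (fun N : ℕ => 8*(1/(N+1:ℝ))) atTop (nhds 0) := by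
        simpa using (tendsto_one_div_add_atTop_nhds_zero_nat).const_mul (8:ℝ)
      have h9 := (Real.continuous_sqrt.tendsto 0).comp h8
      rw [Real.sqrt_zero] at h9
      exact h9
  -- limit
  obtain ⟨p, hp⟩ := cauchySeq_tendsto_of_complete hcauchy
  have hpK : p ∈ K := hKcl.mem_of_tendsto hp (Filter.Eventually.of_forall huK)
  have hnormt : Filter.Tendsto (fun n => ‖u n - p‖) atTop (nhds 0) := by
    have := tendsto_iff_dist_tendsto_zero.mp hp
    simpa [dist_eq_norm] using this
  have hgp : Filter.Tendsto (fun n => g (u n)) atTop (nhds (g p)) := by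
    rw [tendsto_iff_dist_tendsto_zero]
    refine squeeze_zero (g := fun n => |L| * ‖u n - p‖) (fun n => dist_nonneg) (fun n => ?_) ?_
    · show dist (g (u n)) (g p) ≤ |L| * ‖u n - p‖
      rw [Real.dist_eq]
      exact (hL (u n) (huK n) p hpK).trans
        (mul_le_mul_of_nonneg_right (le_abs_self L) (norm_nonneg _))
    · simpa using hnormt.const_mul |L|
  have hFp : Filter.Tendsto (fun n => F (u n)) atTop (nhds (F p)) := by
    have hc : Continuous (fun v : X => (1/2) * ‖v - x‖^2) :=
      continuous_const.mul (((continuous_id.sub continuous_const).norm).pow 2)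
    have h1 : Filter.Tendsto (fun n => (1/2) * ‖u n - x‖^2) atTop (nhds ((1/2) * ‖p - x‖^2)) :=
      (hc.tendsto p).comp hp
    exact h1.add hgp
  have hdtend : Filter.Tendsto (fun n : ℕ => d + 1/(n+1:ℝ)) atTop (nhds d) := by
    have := (tendsto_const_nhds (x := d) (f := Filter.atTop (α := ℕ))).add
      tendsto_one_div_add_atTop_nhds_zero_nat
    simpa using this
  have hFpd : F p ≤ d := le_of_tendsto_of_tendsto' hFp hdtend (fun n => (huF n).le)
  have hmin : ∀ v ∈ K, F p ≤ F v := fun v hv => hFpd.trans (hdle v hv)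
  -- variational characterization
  refine ⟨p, hpK, fun v hv => ?_⟩
  have key : ∀ n : ℕ, ⟪x - p, v - p⟫ - (g v - g p) ≤ (1/(n+1)) * (‖v - p‖^2/2) := by
    intro n
    set t : ℝ := 1/(n+1) with hts
    have ht0 : 0 < t := by positivity
    have ht1 : t ≤ 1 := by
      rw [hts]
      rw [div_le_one (by positivity)]
      linarith [Nat.cast_nonneg (α := ℝ) n]
    have hzeq : p + t • (v - p) = (1-t) • p + t • v := by module
    have hzK : p + t • (v - p) ∈ K := by
      rw [hzeq]; exact hKcv hpK hv (by linarith) ht0.le (by ring)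
    have hFz : F p ≤ F (p + t • (v - p)) := hmin _ hzK
    have hpt : p + t • (v - p) - x = (p - x) + t • (v - p) := by abel
    have hnorm : ‖p + t • (v - p) - x‖^2
        = ‖p - x‖^2 + 2*(t*⟪p - x, v - p⟫) + t^2*‖v - p‖^2 := by
      rw [hpt, norm_add_sq_real, real_inner_smul_right, norm_smul, Real.norm_eq_abs,
        abs_of_pos ht0, mul_pow]
    have hgz : g (p + t • (v - p)) ≤ (1-t)*(g p) + t*(g v) := by
      rw [hzeq]
      exact hgconv.2 hpK hv (by linarith) ht0.le (by ring)
    have hFzeq : F (p + t • (v - p)) = (1/2) * ‖p + t • (v - p) - x‖^2 + g (p + t • (v - p)) := rfl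
    have hFpeq : F p = (1/2) * ‖p - x‖^2 + g p := rfl
    have hinner : ⟪x - p, v - p⟫ = -⟪p - x, v - p⟫ := by
      rw [show x - p = -(p - x) by abel, inner_neg_left]
    rw [hFpeq, hFzeq, hnorm] at hFz
    have hmain : 0 ≤ t * ((⟪p - x, v - p⟫ + (g v - g p)) + t * (‖v - p‖^2/2)) := by
      nlinarith [hFz, hgz]
    have := (mul_nonneg_iff_of_pos_left ht0).mp hmain
    rw [hinner]
    linarith
  have hlim : Filter.Tendsto (fun n : ℕ => (1/(n+1:ℝ)) * (‖v - p‖^2/2)) atTop (nhds 0) := by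
    have h := (tendsto_one_div_add_atTop_nhds_zero_nat : Tendsto (fun n : ℕ => 1 / ((n : ℝ) + 1)) atTop (nhds 0)).mul_const (‖v - p‖^2/2)
    rw [zero_mul] at h
    exact h
  linarith [ge_of_tendsto hlim (Filter.Eventually.of_forall key)]

theorem aux_stab {X : Type*} [NormedAddCommGroup X] [InnerProductSpace ℝ X]
    {K : Set X} {A : X → X} {mA : ℝ} (hmA : 0 < mA)
    (hAmono : ∀ u v : X, mA * ‖u - v‖ ^ 2 ≤ ⟪A u - A v, u - v⟫)
    {g₁ g₂ : X → ℝ} {b₁ b₂ : X} {w₁ w₂ : X} (hw₁ : w₁ ∈ K) (hw₂ : w₂ ∈ K)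
    (h₁ : ∀ v ∈ K, ⟪b₁ - A w₁, v - w₁⟫ ≤ g₁ v - g₁ w₁)
    (h₂ : ∀ v ∈ K, ⟪b₂ - A w₂, v - w₂⟫ ≤ g₂ v - g₂ w₂)
    {D : ℝ} (hD0 : 0 ≤ D) (hD : g₁ w₂ - g₁ w₁ + g₂ w₁ - g₂ w₂ ≤ D * ‖w₁ - w₂‖) :
    ‖w₁ - w₂‖ ≤ (D + ‖b₁ - b₂‖) / mA := by
  have k₁ := h₁ w₂ hw₂
  have k₂ := h₂ w₁ hw₁
  have he : ⟪b₂ - A w₂, w₁ - w₂⟫ = -⟪b₂ - A w₂, w₂ - w₁⟫ := by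
    rw [show w₁ - w₂ = -(w₂ - w₁) by abel, inner_neg_right]
  have hsplit : ⟪b₁ - A w₁, w₂ - w₁⟫ - ⟪b₂ - A w₂, w₂ - w₁⟫
      = ⟪b₁ - b₂, w₂ - w₁⟫ - ⟪A w₁ - A w₂, w₂ - w₁⟫ := by
    rw [← inner_sub_left, ← inner_sub_left]
    congr 1
    abel
  have hAflip : ⟪A w₁ - A w₂, w₂ - w₁⟫ = -⟪A w₁ - A w₂, w₁ - w₂⟫ := by
    rw [show w₂ - w₁ = -(w₁ - w₂) by abel, inner_neg_right]
  have hcs : -⟪b₁ - b₂, w₂ - w₁⟫ ≤ ‖b₁ - b₂‖ * ‖w₁ - w₂‖ := by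
    have h := real_inner_le_norm (b₂ - b₁) (w₂ - w₁)
    rw [show ‖w₂ - w₁‖ = ‖w₁ - w₂‖ from norm_sub_rev _ _,
      show ‖b₂ - b₁‖ = ‖b₁ - b₂‖ from norm_sub_rev _ _] at h
    rw [show -⟪b₁ - b₂, w₂ - w₁⟫ = ⟪b₂ - b₁, w₂ - w₁⟫ by
      rw [show b₂ - b₁ = -(b₁ - b₂) by abel, inner_neg_left]]
    exact h
  have hmono := hAmono w₁ w₂
  have hkey : mA * ‖w₁ - w₂‖ ^ 2 ≤ (D + ‖b₁ - b₂‖) * ‖w₁ - w₂‖ := by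
    nlinarith [k₁, k₂]
  rcases eq_or_lt_of_le (norm_nonneg (w₁ - w₂)) with h0 | h0
  · rw [← h0]
    positivity
  · rw [le_div_iff₀ hmA]
    nlinarith [hkey, h0]

theorem aux_elliptic {X : Type*} [NormedAddCommGroup X] [InnerProductSpace ℝ X] [CompleteSpace X]
    {K : Set X} (hKne : K.Nonempty) (hKcl : IsClosed K) (hKcv : Convex ℝ K)
    {A : X → X} {mA LA : ℝ} (hmA : 0 < mA)
    (hAmono : ∀ u v : X, mA * ‖u - v‖ ^ 2 ≤ ⟪A u - A v, u - v⟫)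
    (hLA : 0 < LA) (hAlip : ∀ u v : X, ‖A u - A v‖ ≤ LA * ‖u - v‖)
    {g : X → ℝ} (hgconv : ConvexOn ℝ K g)
    (hglip : ∃ L : ℝ, ∀ v ∈ K, ∀ w ∈ K, |g v - g w| ≤ L * ‖v - w‖) (b : X) :
    ∃ w ∈ K, ∀ v ∈ K, ⟪b - A w, v - w⟫ ≤ g v - g w := by
  set ρ : ℝ := mA / LA^2 with hρ
  have hρ0 : 0 < ρ := by positivity
  have hg'conv : ConvexOn ℝ K (fun v => ρ * g v) := by
    refine ⟨hKcv, fun x hx y hy a c ha hc hac => ?_⟩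
    have := hgconv.2 hx hy ha hc hac
    simp only [smul_eq_mul] at this ⊢
    nlinarith
  have hg'lip : ∃ L : ℝ, ∀ v ∈ K, ∀ w ∈ K, |ρ * g v - ρ * g w| ≤ L * ‖v - w‖ := by
    obtain ⟨L, hL⟩ := hglip
    refine ⟨ρ * L, fun v hv w hw => ?_⟩
    have h1 := hL v hv w hw
    calc |ρ * g v - ρ * g w| = ρ * |g v - g w| := by
          rw [← mul_sub, abs_mul, abs_of_pos hρ0]
      _ ≤ ρ * (L * ‖v - w‖) := by
          exact mul_le_mul_of_nonneg_left h1 hρ0.le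
      _ = ρ * L * ‖v - w‖ := by ring
  choose P hPK hP using fun x : X =>
    aux_prox hKne hKcl hKcv hg'conv hg'lip x
  have hPne : ∀ x₁ x₂ : X, ‖P x₁ - P x₂‖ ≤ ‖x₁ - x₂‖ := by
    intro x₁ x₂
    have k₁ := hP x₁ (P x₂) (hPK x₂)
    have k₂ := hP x₂ (P x₁) (hPK x₁)
    rw [show P x₂ - P x₁ = -(P x₁ - P x₂) by abel, inner_neg_right] at k₁
    have e2 : ⟪x₂ - P x₂, P x₁ - P x₂⟫ - ⟪x₁ - P x₁, P x₁ - P x₂⟫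
        = ⟪x₂ - x₁, P x₁ - P x₂⟫ + ‖P x₁ - P x₂‖^2 := by
      rw [← inner_sub_left,
        show x₂ - P x₂ - (x₁ - P x₁) = (x₂ - x₁) + (P x₁ - P x₂) by abel,
        inner_add_left, real_inner_self_eq_norm_sq]
    have hcs := real_inner_le_norm (x₁ - x₂) (P x₁ - P x₂)
    have e3 : ⟪x₂ - x₁, P x₁ - P x₂⟫ = -⟪x₁ - x₂, P x₁ - P x₂⟫ := by
      rw [show x₂ - x₁ = -(x₁ - x₂) by abel, inner_neg_left]
    rcases eq_or_lt_of_le (norm_nonneg (P x₁ - P x₂)) with h0 | h0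
    · rw [← h0]; exact norm_nonneg _
    · nlinarith
  set k2 : ℝ := max 0 (1 - mA^2/LA^2) with hk2
  have hk2nn : 0 ≤ k2 := le_max_left _ _
  set κr : ℝ := Real.sqrt k2 with hκr
  have hκnn : 0 ≤ κr := Real.sqrt_nonneg _
  have hκsq : κr^2 = k2 := Real.sq_sqrt hk2nn
  have hκlt : κr < 1 := by
    have hk2lt : k2 < 1 := by
      rw [hk2]
      apply max_lt one_pos
      have : 0 < mA^2/LA^2 := by positivity
      linarith
    nlinarith
  have hcontr : ∀ w₁ w₂ : X,
      ‖P (w₁ - ρ • (A w₁ - b)) - P (w₂ - ρ • (A w₂ - b))‖ ≤ κr * ‖w₁ - w₂‖ := by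
    intro w₁ w₂
    have h1 := hPne (w₁ - ρ • (A w₁ - b)) (w₂ - ρ • (A w₂ - b))
    have e1 : (w₁ - ρ • (A w₁ - b)) - (w₂ - ρ • (A w₂ - b))
        = (w₁ - w₂) - ρ • (A w₁ - A w₂) := by module
    rw [e1] at h1
    have hsq : ‖(w₁ - w₂) - ρ • (A w₁ - A w₂)‖^2 ≤ k2 * ‖w₁ - w₂‖^2 := by
      rw [norm_sub_sq_real, real_inner_smul_right, norm_smul, Real.norm_eq_abs,
        abs_of_pos hρ0, mul_pow]
      have hAn := hAlip w₁ w₂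
      have hAm := hAmono w₁ w₂
      have hcomm : ⟪w₁ - w₂, A w₁ - A w₂⟫ = ⟪A w₁ - A w₂, w₁ - w₂⟫ := real_inner_comm _ _
      have hAn2 : ‖A w₁ - A w₂‖^2 ≤ LA^2 * ‖w₁ - w₂‖^2 := by nlinarith [norm_nonneg (A w₁ - A w₂), norm_nonneg (w₁ - w₂)]
      have hle : 1 - mA^2/LA^2 ≤ k2 := le_max_right _ _
      have hρeq : ρ = mA / LA^2 := hρ
      rw [hcomm]
      have expand : ‖w₁ - w₂‖ ^ 2 - 2 * (ρ * ⟪A w₁ - A w₂, w₁ - w₂⟫) + ρ^2 * ‖A w₁ - A w₂‖ ^ 2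
          ≤ (1 - mA^2/LA^2) * ‖w₁ - w₂‖^2 := by
        have h2 : 2 * (ρ * (mA * ‖w₁ - w₂‖^2)) ≤ 2 * (ρ * ⟪A w₁ - A w₂, w₁ - w₂⟫) := by
          have := mul_le_mul_of_nonneg_left hAm hρ0.le
          linarith
        have h3 : ρ^2 * ‖A w₁ - A w₂‖^2 ≤ ρ^2 * (LA^2 * ‖w₁ - w₂‖^2) :=
          mul_le_mul_of_nonneg_left hAn2 (by positivity)
        calc ‖w₁ - w₂‖ ^ 2 - 2 * (ρ * ⟪A w₁ - A w₂, w₁ - w₂⟫) + ρ^2 * ‖A w₁ - A w₂‖ ^ 2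
            ≤ ‖w₁ - w₂‖ ^ 2 - 2 * (ρ * (mA * ‖w₁ - w₂‖^2)) + ρ^2 * (LA^2 * ‖w₁ - w₂‖^2) := by
              linarith
          _ = (1 - 2*(ρ*mA) + ρ^2*LA^2) * ‖w₁ - w₂‖^2 := by ring
          _ = (1 - mA^2/LA^2) * ‖w₁ - w₂‖^2 := by
              rw [hρ]; field_simp; ring
      calc ‖w₁ - w₂‖ ^ 2 - 2 * (ρ * ⟪A w₁ - A w₂, w₁ - w₂⟫) + ρ^2 * ‖A w₁ - A w₂‖ ^ 2
          ≤ (1 - mA^2/LA^2) * ‖w₁ - w₂‖^2 := expand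
        _ ≤ k2 * ‖w₁ - w₂‖^2 := mul_le_mul_of_nonneg_right hle (sq_nonneg _)
    have : ‖(w₁ - w₂) - ρ • (A w₁ - A w₂)‖ ≤ κr * ‖w₁ - w₂‖ := by
      nlinarith [norm_nonneg ((w₁ - w₂) - ρ • (A w₁ - A w₂)), norm_nonneg (w₁ - w₂),
        mul_nonneg hκnn (norm_nonneg (w₁ - w₂))]
    linarith
  haveI : Nonempty K := hKne.to_subtype
  haveI : CompleteSpace K := hKcl.completeSpace_coe
  set Φ : K → K := fun w => ⟨P ((w : X) - ρ • (A w - b)), hPK _⟩ with hΦ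
  have hΦc : ContractingWith ⟨κr, hκnn⟩ Φ := by
    constructor
    · exact_mod_cast hκlt
    · apply LipschitzWith.of_dist_le_mul
      intro w₁ w₂
      rw [Subtype.dist_eq, dist_eq_norm, Subtype.dist_eq, dist_eq_norm]
      exact hcontr _ _
  set wK : K := ContractingWith.fixedPoint Φ hΦc with hwK
  have hfix : Φ wK = wK := hΦc.fixedPoint_isFixedPt
  refine ⟨(wK : X), wK.2, fun v hv => ?_⟩
  have hfix' : P ((wK : X) - ρ • (A wK - b)) = (wK : X) := congrArg Subtype.val hfix
  have hvi := hP ((wK : X) - ρ • (A wK - b)) v hv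
  rw [hfix'] at hvi
  have e1 : (wK : X) - ρ • (A wK - b) - (wK : X) = ρ • (b - A wK) := by module
  rw [e1, real_inner_smul_left] at hvi
  have := (mul_le_mul_iff_right₀ hρ0).mp (by linarith : ρ * ⟪b - A (wK : X), v - (wK : X)⟫ ≤ ρ * (g v - g (wK : X)))
  linarith

theorem aux_gronwall {T C : ℝ} (hT : 0 < T) (hC : 0 ≤ C) {φ : ℝ → ℝ}
    (hφc : Continuous φ) (hφ0 : ∀ t, 0 ≤ φ t)
    (h : ∀ t ∈ Set.Icc (0:ℝ) T, φ t ≤ C * ∫ s in (0:ℝ)..t, φ s) :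
    ∀ t ∈ Set.Icc (0:ℝ) T, φ t = 0 := by
  obtain ⟨M, hM⟩ : ∃ M : ℝ, ∀ t ∈ Set.Icc (0:ℝ) T, φ t ≤ M := by
    obtain ⟨xm, _, hxm⟩ := isCompact_Icc.exists_isMaxOn (Set.nonempty_Icc.mpr hT.le)
      hφc.continuousOn
    exact ⟨φ xm, fun t ht => hxm ht⟩
  have hM0 : 0 ≤ M := le_trans (hφ0 0) (hM 0 (Set.mem_Icc.mpr ⟨le_refl _, hT.le⟩))
  have key : ∀ n : ℕ, ∀ t ∈ Set.Icc (0:ℝ) T, φ t ≤ M * C^n * t^n / n.factorial := by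
    intro n
    induction n with
    | zero => intro t ht; simpa using hM t ht
    | succ n ih =>
      intro t ht
      obtain ⟨ht0, htT⟩ := Set.mem_Icc.mp ht
      have hint : ∫ s in (0:ℝ)..t, φ s ≤ ∫ s in (0:ℝ)..t, M * C^n / n.factorial * s^n := by
        apply integral_mono_on ht0 (hφc.intervalIntegrable 0 t)
          ((continuous_const.mul (continuous_pow n)).intervalIntegrable 0 t)
        intro s hs
        have hsIcc : s ∈ Set.Icc (0:ℝ) T := ⟨hs.1, hs.2.trans htT⟩
        calc φ s ≤ M * C^n * s^n / n.factorial := ih s hsIcc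
          _ = M * C^n / n.factorial * s^n := by ring
      have hval : ∫ s in (0:ℝ)..t, M * C^n / n.factorial * s^n
          = M * C^n / n.factorial * (t^(n+1) / (n+1)) := by
        rw [integral_const_mul, integral_pow]
        norm_num
      calc φ t ≤ C * ∫ s in (0:ℝ)..t, φ s := h t ht
        _ ≤ C * (M * C^n / n.factorial * (t^(n+1) / (n+1))) := by
            rw [← hval]
            apply mul_le_mul_of_nonneg_left hint hC
        _ = M * C^(n+1) * t^(n+1) / (n+1).factorial := by
            rw [Nat.factorial_succ]
            push_cast
            field_simp
            ring
  intro t ht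
  have hb : ∀ n : ℕ, φ t ≤ M * ((C*T)^n / n.factorial) := by
    intro n
    calc φ t ≤ M * C^n * t^n / n.factorial := key n t ht
      _ ≤ M * ((C*T)^n / n.factorial) := by
        rw [mul_pow]
        have h1 : t^n ≤ T^n := pow_le_pow_left₀ ht.1 ht.2 n
        have h2 : C^n * t^n ≤ C^n * T^n :=
          mul_le_mul_of_nonneg_left h1 (pow_nonneg hC n)
        have h3 : M * (C^n * t^n) ≤ M * (C^n * T^n) :=
          mul_le_mul_of_nonneg_left h2 hM0
        calc M * C^n * t^n / n.factorial = M * (C^n * t^n) / n.factorial := by ring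
          _ ≤ M * (C^n * T^n) / n.factorial := by
              have hfac : (0:ℝ) ≤ n.factorial := by
                exact_mod_cast n.factorial_pos.le
              exact div_le_div_of_nonneg_right h3 hfac

          _ = M * (C ^ n * T ^ n / ↑n.factorial) := by ring
  have hlim : Tendsto (fun n : ℕ => M * ((C*T)^n / n.factorial)) atTop (nhds 0) := by
    have := FloorSemiring.tendsto_pow_div_factorial_atTop (C*T)
    simpa using this.const_mul M
  exact le_antisymm (ge_of_tendsto hlim (Eventually.of_forall hb)) (hφ0 t)

/-- Theorem 4.1 / Corollary 4.2 of the paper (variational-inequality form of the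
sweeping process `-u̇(t) ∈ N_{C(Ru̇(t),t)}(Au̇(t) + Bu(t) + Su̇(t))`, `u(0)=u₀`):
with `A` strongly monotone and Lipschitz, `B` Lipschitz, `R, S`
history-dependent, and `j` satisfying condition (j), there is a unique
`u ∈ C¹([0,T];X)` with `u(0) = u₀`, `u̇(t) ∈ K` and
`j(Ru̇(t),v) - j(Ru̇(t),u̇(t)) ≥ ⟪f(t) - Au̇(t) - Bu(t) - Su̇(t), v - u̇(t)⟫`
for all `v ∈ K`, `t ∈ [0,T]`.  Functions on `[0,T]` are represented by
functions on `ℝ`, unique up to their values on `[0,T]`. -/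
theorem sweeping_process_existence_uniqueness
    {X Y : Type*} [NormedAddCommGroup X] [InnerProductSpace ℝ X] [CompleteSpace X]
    [NormedAddCommGroup Y] [InnerProductSpace ℝ Y] [CompleteSpace Y]
    {T : ℝ} (hT : 0 < T)
    (K : Set X) (hKne : K.Nonempty) (hKcl : IsClosed K) (hKcv : Convex ℝ K)
    (hKcone : ∀ c : ℝ, 0 < c → ∀ x ∈ K, c • x ∈ K) (hK0 : (0 : X) ∈ K)
    (A : X → X) (mA : ℝ) (hmA : 0 < mA)
    (hAmono : ∀ u v : X, mA * ‖u - v‖ ^ 2 ≤ ⟪A u - A v, u - v⟫)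
    (hAlip : ∃ LA : ℝ, 0 < LA ∧ ∀ u v : X, ‖A u - A v‖ ≤ LA * ‖u - v‖)
    (B : X → X) (hBlip : ∃ LB : ℝ, 0 < LB ∧ ∀ u v : X, ‖B u - B v‖ ≤ LB * ‖u - v‖)
    (u₀ : X)
    (R : (ℝ → X) → (ℝ → Y)) (S : (ℝ → X) → (ℝ → X))
    (hRmap : ∀ u : ℝ → X, Continuous u → Continuous (R u))
    (hSmap : ∀ u : ℝ → X, Continuous u → Continuous (S u))
    (hR : ∃ LR : ℝ, 0 < LR ∧
      ∀ u₁ u₂ : ℝ → X, Continuous u₁ → Continuous u₂ → ∀ t ∈ Set.Icc (0:ℝ) T,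
        ‖R u₁ t - R u₂ t‖ ≤ LR * ∫ s in (0:ℝ)..t, ‖u₁ s - u₂ s‖)
    (hS : ∃ LS : ℝ, 0 < LS ∧
      ∀ u₁ u₂ : ℝ → X, Continuous u₁ → Continuous u₂ → ∀ t ∈ Set.Icc (0:ℝ) T,
        ‖S u₁ t - S u₂ t‖ ≤ LS * ∫ s in (0:ℝ)..t, ‖u₁ s - u₂ s‖)
    (j : Y → X → ℝ)
    (hjconv : ∀ η : Y, ConvexOn ℝ K (j η))
    (hjpos : ∀ η : Y, ∀ l : ℝ, 0 < l → ∀ v ∈ K, j η (l • v) = l * j η v)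
    (hjlip : ∀ η : Y, ∃ Lj : ℝ, ∀ v ∈ K, ∀ w ∈ K, |j η v - j η w| ≤ Lj * ‖v - w‖)
    (αj : ℝ) (hαj : 0 ≤ αj)
    (hjb : ∀ η₁ η₂ : Y, ∀ v₁ ∈ K, ∀ v₂ ∈ K,
      j η₁ v₂ - j η₁ v₁ + j η₂ v₁ - j η₂ v₂ ≤ αj * ‖η₁ - η₂‖ * ‖v₁ - v₂‖)
    (f : ℝ → X) (hf : Continuous f) :
    ∃ u w : ℝ → X,
      (Continuous u ∧ Continuous w ∧
        (∀ t ∈ Set.Icc (0:ℝ) T, HasDerivWithinAt u (w t) (Set.Icc (0:ℝ) T) t) ∧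
        u 0 = u₀ ∧
        ∀ t ∈ Set.Icc (0:ℝ) T, w t ∈ K ∧
          ∀ v ∈ K, j (R w t) v - j (R w t) (w t) ≥
            ⟪f t - A (w t) - B (u t) - S w t, v - w t⟫) ∧
      ∀ u' w' : ℝ → X,
        (Continuous u' ∧ Continuous w' ∧
          (∀ t ∈ Set.Icc (0:ℝ) T, HasDerivWithinAt u' (w' t) (Set.Icc (0:ℝ) T) t) ∧
          u' 0 = u₀ ∧
          ∀ t ∈ Set.Icc (0:ℝ) T, w' t ∈ K ∧
            ∀ v ∈ K, j (R w' t) v - j (R w' t) (w' t) ≥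
              ⟪f t - A (w' t) - B (u' t) - S w' t, v - w' t⟫) →
        ∀ t ∈ Set.Icc (0:ℝ) T, u' t = u t := by
  obtain ⟨LA, hLA, hAlip⟩ := hAlip
  obtain ⟨LB, hLB, hBlip⟩ := hBlip
  obtain ⟨LR, hLR, hR⟩ := hR
  obtain ⟨LS, hLS, hS⟩ := hS
  have hT' : (0:ℝ) ≤ T := hT.le
  have hBcont : Continuous B := by
    apply (LipschitzWith.of_dist_le_mul (K := Real.toNNReal LB) ?_).continuous
    intro a b
    rw [Real.coe_toNNReal _ hLB.le, dist_eq_norm, dist_eq_norm]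
    exact hBlip a b
  -- elliptic solver and its properties
  choose sol hsolK hsol using fun (η : Y) (c : X) =>
    aux_elliptic hKne hKcl hKcv hmA hAmono hLA hAlip (hjconv η) (hjlip η) c
  have hsolLip : ∀ (η₁ η₂ : Y) (c₁ c₂ : X),
      ‖sol η₁ c₁ - sol η₂ c₂‖ ≤ (αj * ‖η₁ - η₂‖ + ‖c₁ - c₂‖) / mA := fun η₁ η₂ c₁ c₂ =>
    aux_stab hmA hAmono (hsolK η₁ c₁) (hsolK η₂ c₂) (hsol η₁ c₁) (hsol η₂ c₂)
      (mul_nonneg hαj (norm_nonneg _)) (hjb η₁ η₂ _ (hsolK η₁ c₁) _ (hsolK η₂ c₂))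
  have hsolCont : ∀ (η : ℝ → Y) (c : ℝ → X), Continuous η → Continuous c →
      Continuous fun t => sol (η t) (c t) := by
    intro η c hη hc
    have hlip : LipschitzWith (Real.toNNReal ((αj + 1)/mA)) (fun p : Y × X => sol p.1 p.2) := by
      apply LipschitzWith.of_dist_le_mul
      intro p q
      rw [Real.coe_toNNReal _ (by positivity)]
      have h1 := hsolLip p.1 q.1 p.2 q.2
      have hd1 : ‖p.1 - q.1‖ ≤ dist p q := by
        rw [← dist_eq_norm, Prod.dist_eq (x := p) (y := q)]; exact le_max_left _ _
      have hd2 : ‖p.2 - q.2‖ ≤ dist p q := by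
        rw [← dist_eq_norm, Prod.dist_eq (x := p) (y := q)]; exact le_max_right _ _
      rw [dist_eq_norm]
      refine h1.trans ?_
      rw [div_le_iff₀ hmA]
      have hdnn : 0 ≤ dist p q := dist_nonneg
      calc αj * ‖p.1 - q.1‖ + ‖p.2 - q.2‖ ≤ αj * dist p q + dist p q := by
            exact add_le_add (mul_le_mul_of_nonneg_left hd1 hαj) hd2
        _ = (αj + 1) / mA * dist p q * mA := by field_simp
    exact hlip.continuous.comp (hη.prodMk hc)
  -- constants
  set Cst : ℝ := (αj * LR + LB + LS)/mA with hCst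
  have hCst0 : 0 ≤ Cst := by positivity
  -- integral facts
  have hIcont : ∀ w : ℝ → X, Continuous w →
      Continuous (fun t : ℝ => ∫ s in (0:ℝ)..t, w s) := by
    intro w hw
    exact continuous_iff_continuousAt.mpr fun t =>
      ((hw.integral_hasStrictDerivAt 0 t).hasDerivAt).continuousAt
  have hInt : ∀ (w₁ w₂ : ℝ → X), Continuous w₁ → Continuous w₂ → ∀ t : ℝ, 0 ≤ t →
      ‖(∫ s in (0:ℝ)..t, w₁ s) - ∫ s in (0:ℝ)..t, w₂ s‖
        ≤ ∫ s in (0:ℝ)..t, ‖w₁ s - w₂ s‖ := by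
    intro w₁ w₂ h1 h2 t ht
    rw [← intervalIntegral.integral_sub (h1.intervalIntegrable 0 t) (h2.intervalIntegrable 0 t)]
    exact intervalIntegral.norm_integral_le_integral_norm ht
  -- data bound
  have hdata : ∀ (w₁ w₂ : ℝ → X), Continuous w₁ → Continuous w₂ → ∀ t ∈ Set.Icc (0:ℝ) T,
      ∀ U₁ U₂ : X, ‖U₁ - U₂‖ ≤ (∫ s in (0:ℝ)..t, ‖w₁ s - w₂ s‖) →
      (αj * ‖R w₁ t - R w₂ t‖ + ‖(f t - B U₁ - S w₁ t) - (f t - B U₂ - S w₂ t)‖) / mA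
        ≤ Cst * ∫ s in (0:ℝ)..t, ‖w₁ s - w₂ s‖ := by
    intro w₁ w₂ h1 h2 t ht U₁ U₂ hU
    set I := ∫ s in (0:ℝ)..t, ‖w₁ s - w₂ s‖ with hI
    have hI0 : 0 ≤ I := intervalIntegral.integral_nonneg ht.1 (fun s _ => norm_nonneg _)
    have hRb : ‖R w₁ t - R w₂ t‖ ≤ LR * I := hR w₁ w₂ h1 h2 t ht
    have hSb : ‖S w₁ t - S w₂ t‖ ≤ LS * I := hS w₁ w₂ h1 h2 t ht
    have hBb : ‖B U₁ - B U₂‖ ≤ LB * I := by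
      refine (hBlip U₁ U₂).trans ?_
      exact mul_le_mul_of_nonneg_left hU hLB.le
    have hGb : ‖(f t - B U₁ - S w₁ t) - (f t - B U₂ - S w₂ t)‖ ≤ LB * I + LS * I := by
      have he : (f t - B U₁ - S w₁ t) - (f t - B U₂ - S w₂ t)
          = (B U₂ - B U₁) + (S w₂ t - S w₁ t) := by abel
      rw [he]
      refine (norm_add_le _ _).trans ?_
      rw [norm_sub_rev (B U₂), norm_sub_rev (S w₂ t)]
      exact add_le_add hBb hSb
    rw [hCst, div_mul_eq_mul_div]
    apply div_le_div_of_nonneg_right ?_ hmA.le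
    calc αj * ‖R w₁ t - R w₂ t‖ + ‖(f t - B U₁ - S w₁ t) - (f t - B U₂ - S w₂ t)‖
        ≤ αj * (LR * I) + (LB * I + LS * I) :=
          add_le_add (mul_le_mul_of_nonneg_left hRb hαj) hGb
      _ = (αj * LR + LB + LS) * I := by ring
  -- the fixed point map on C([0,T];X)
  have hEcont : ∀ w' : C(Set.Icc (0:ℝ) T, X), Continuous (Set.IccExtend hT' ⇑w') :=
    fun w' => w'.continuous.Icc_extend'
  set Λ : C(Set.Icc (0:ℝ) T, X) → C(Set.Icc (0:ℝ) T, X) := fun wt =>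
    ⟨fun t => sol (R (Set.IccExtend hT' ⇑wt) ↑t)
        (f ↑t - B (u₀ + ∫ s in (0:ℝ)..(t:ℝ), Set.IccExtend hT' ⇑wt s)
          - S (Set.IccExtend hT' ⇑wt) ↑t),
      Continuous.comp
        (hsolCont _ _ (hRmap _ (hEcont wt))
          ((hf.sub (hBcont.comp (continuous_const.add (hIcont _ (hEcont wt))))).sub
            (hSmap _ (hEcont wt))))
        continuous_subtype_val⟩ with hΛdef
  -- one-step estimate
  have hstep : ∀ wt₁ wt₂ : C(Set.Icc (0:ℝ) T, X), ∀ t : Set.Icc (0:ℝ) T,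
      ‖Λ wt₁ t - Λ wt₂ t‖
        ≤ Cst * ∫ s in (0:ℝ)..(t:ℝ), ‖Set.IccExtend hT' ⇑wt₁ s - Set.IccExtend hT' ⇑wt₂ s‖ := by
    intro wt₁ wt₂ t
    have h1 := hsolLip (R (Set.IccExtend hT' ⇑wt₁) ↑t) (R (Set.IccExtend hT' ⇑wt₂) ↑t)
      (f ↑t - B (u₀ + ∫ s in (0:ℝ)..(t:ℝ), Set.IccExtend hT' ⇑wt₁ s) - S (Set.IccExtend hT' ⇑wt₁) ↑t)
      (f ↑t - B (u₀ + ∫ s in (0:ℝ)..(t:ℝ), Set.IccExtend hT' ⇑wt₂ s) - S (Set.IccExtend hT' ⇑wt₂) ↑t)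
    refine h1.trans (hdata _ _ (hEcont wt₁) (hEcont wt₂) ↑t t.2 _ _ ?_)
    have h2 := hInt (Set.IccExtend hT' ⇑wt₁) (Set.IccExtend hT' ⇑wt₂)
      (hEcont wt₁) (hEcont wt₂) ↑t t.2.1
    calc ‖(u₀ + ∫ s in (0:ℝ)..(t:ℝ), Set.IccExtend hT' ⇑wt₁ s)
          - (u₀ + ∫ s in (0:ℝ)..(t:ℝ), Set.IccExtend hT' ⇑wt₂ s)‖
        = ‖(∫ s in (0:ℝ)..(t:ℝ), Set.IccExtend hT' ⇑wt₁ s)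
            - ∫ s in (0:ℝ)..(t:ℝ), Set.IccExtend hT' ⇑wt₂ s‖ := by
          rw [add_sub_add_left_eq_sub]
      _ ≤ _ := h2
  -- iterated estimate
  have hiter : ∀ n : ℕ, ∀ wt₁ wt₂ : C(Set.Icc (0:ℝ) T, X), ∀ t : Set.Icc (0:ℝ) T,
      ‖(Λ^[n] wt₁) t - (Λ^[n] wt₂) t‖
        ≤ Cst^n * (t:ℝ)^n / n.factorial * dist wt₁ wt₂ := by
    intro n
    induction n with
    | zero =>
      intro wt₁ wt₂ t
      simpa [dist_eq_norm] using ContinuousMap.dist_apply_le_dist (f := wt₁) (g := wt₂) t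
    | succ n ih =>
      intro wt₁ wt₂ t
      rw [Function.iterate_succ_apply', Function.iterate_succ_apply']
      have hdn : (0:ℝ) ≤ dist wt₁ wt₂ := dist_nonneg
      have hmono : (∫ s in (0:ℝ)..(t:ℝ), ‖Set.IccExtend hT' ⇑(Λ^[n] wt₁) s - Set.IccExtend hT' ⇑(Λ^[n] wt₂) s‖)
          ≤ ∫ s in (0:ℝ)..(t:ℝ), Cst^n / n.factorial * dist wt₁ wt₂ * s^n := by
        apply integral_mono_on t.2.1
          (((hEcont _).sub (hEcont _)).norm.intervalIntegrable 0 ↑t)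
          ((continuous_const.mul (continuous_pow n)).intervalIntegrable 0 ↑t)
        intro s hs
        have hsmem : s ∈ Set.Icc (0:ℝ) T := ⟨hs.1, hs.2.trans t.2.2⟩
        show ‖Set.IccExtend hT' ⇑(Λ^[n] wt₁) s - Set.IccExtend hT' ⇑(Λ^[n] wt₂) s‖ ≤ Cst^n / n.factorial * dist wt₁ wt₂ * s^n
        rw [Set.IccExtend_of_mem hT' _ hsmem, Set.IccExtend_of_mem hT' _ hsmem]
        calc ‖(Λ^[n] wt₁) ⟨s, hsmem⟩ - (Λ^[n] wt₂) ⟨s, hsmem⟩‖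
            ≤ Cst^n * s^n / n.factorial * dist wt₁ wt₂ := ih wt₁ wt₂ ⟨s, hsmem⟩
          _ = Cst^n / n.factorial * dist wt₁ wt₂ * s^n := by ring
      have hval : (∫ s in (0:ℝ)..(t:ℝ), Cst^n / n.factorial * dist wt₁ wt₂ * s^n)
          = Cst^n / n.factorial * dist wt₁ wt₂ * ((t:ℝ)^(n+1) / (n+1)) := by
        rw [integral_const_mul, integral_pow]
        norm_num
      calc ‖Λ (Λ^[n] wt₁) t - Λ (Λ^[n] wt₂) t‖
          ≤ Cst * ∫ s in (0:ℝ)..(t:ℝ), ‖Set.IccExtend hT' ⇑(Λ^[n] wt₁) s - Set.IccExtend hT' ⇑(Λ^[n] wt₂) s‖ :=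
            hstep _ _ t
        _ ≤ Cst * (Cst^n / n.factorial * dist wt₁ wt₂ * ((t:ℝ)^(n+1) / (n+1))) := by
            rw [← hval]
            exact mul_le_mul_of_nonneg_left hmono hCst0
        _ = Cst^(n+1) * (t:ℝ)^(n+1) / (n+1).factorial * dist wt₁ wt₂ := by
            rw [Nat.factorial_succ]
            push_cast
            field_simp
            ring
  -- contraction of an iterate
  obtain ⟨n, hn⟩ : ∃ n : ℕ, (Cst*T)^n / n.factorial < 1 := by
    have h0 := FloorSemiring.tendsto_pow_div_factorial_atTop (Cst*T)
    exact (h0.eventually (gt_mem_nhds one_pos)).exists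
  have hκ0 : 0 ≤ (Cst*T)^n / n.factorial := by positivity
  have hΛlip : ∀ wt₁ wt₂ : C(Set.Icc (0:ℝ) T, X),
      dist (Λ^[n] wt₁) (Λ^[n] wt₂) ≤ ((Cst*T)^n / n.factorial) * dist wt₁ wt₂ := by
    intro wt₁ wt₂
    rw [ContinuousMap.dist_le (by positivity)]
    intro t
    rw [dist_eq_norm]
    refine (hiter n wt₁ wt₂ t).trans ?_
    rw [mul_pow, div_mul_eq_mul_div, div_mul_eq_mul_div]
    apply div_le_div_of_nonneg_right ?_ (by exact_mod_cast n.factorial_pos.le)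
    have h1 : (t:ℝ)^n ≤ T^n := pow_le_pow_left₀ t.2.1 t.2.2 n
    have hdn : (0:ℝ) ≤ dist wt₁ wt₂ := dist_nonneg
    calc Cst ^ n * (t:ℝ) ^ n * dist wt₁ wt₂ ≤ Cst ^ n * T ^ n * dist wt₁ wt₂ := by
          apply mul_le_mul_of_nonneg_right ?_ hdn
          exact mul_le_mul_of_nonneg_left h1 (pow_nonneg hCst0 n)
      _ = Cst ^ n * T ^ n * dist wt₁ wt₂ := rfl
  haveI : Nonempty C(Set.Icc (0:ℝ) T, X) := ⟨ContinuousMap.const _ 0⟩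
  have hΛcontr : ContractingWith (Real.toNNReal ((Cst*T)^n / n.factorial)) (Λ^[n]) := by
    constructor
    · rw [← NNReal.coe_lt_coe, Real.coe_toNNReal _ hκ0]
      exact hn
    · apply LipschitzWith.of_dist_le_mul
      intro wt₁ wt₂
      rw [Real.coe_toNNReal _ hκ0]
      exact hΛlip wt₁ wt₂
  set wstar : C(Set.Icc (0:ℝ) T, X) := ContractingWith.fixedPoint (Λ^[n]) hΛcontr with hwstar
  have hfixn : Λ^[n] wstar = wstar := hΛcontr.fixedPoint_isFixedPt
  have hfix : Λ wstar = wstar := by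
    have h1 : Λ^[n] (Λ wstar) = Λ wstar := by
      rw [← Function.iterate_succ_apply, Function.iterate_succ_apply', hfixn]
    exact (hΛcontr.fixedPoint_unique h1).trans (hΛcontr.fixedPoint_unique hfixn).symm
  -- the solution
  set w : ℝ → X := Set.IccExtend hT' ⇑wstar with hw
  set u : ℝ → X := fun t => u₀ + ∫ s in (0:ℝ)..t, w s with hu
  have hwcont : Continuous w := hEcont wstar
  have hucont : Continuous u := continuous_const.add (hIcont _ hwcont)
  have hderiv : ∀ t : ℝ, HasDerivAt u (w t) t := fun t =>
    (HasDerivAt.const_add u₀ ((hwcont.integral_hasStrictDerivAt 0 t).hasDerivAt))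
  have hu0 : u 0 = u₀ := by
    rw [hu]
    simp
  have hsolprop : ∀ t ∈ Set.Icc (0:ℝ) T, w t ∈ K ∧
      ∀ v ∈ K, j (R w t) v - j (R w t) (w t) ≥
        ⟪f t - A (w t) - B (u t) - S w t, v - w t⟫ := by
    intro t ht
    have hwt : w t = sol (R w t) (f t - B (u t) - S w t) := by
      have h1 : w t = wstar ⟨t, ht⟩ := Set.IccExtend_of_mem hT' _ ht
      rw [h1, ← hfix]
      rfl
    constructor
    · rw [hwt]; exact hsolK _ _
    · intro v hv
      have h2 := hsol (R w t) (f t - B (u t) - S w t) v hv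
      rw [← hwt] at h2
      have h3 : f t - B (u t) - S w t - A (w t) = f t - A (w t) - B (u t) - S w t := by abel
      rw [h3] at h2
      linarith
  refine ⟨u, w, ⟨hucont, hwcont, fun t _ => (hderiv t).hasDerivWithinAt, hu0, hsolprop⟩, ?_⟩
  -- uniqueness
  intro u' w' ⟨hu'c, hw'c, hder', hu'0, hprop'⟩ t ht
  have hu'rep : ∀ τ ∈ Set.Icc (0:ℝ) T, u' τ = u₀ + ∫ s in (0:ℝ)..τ, w' s := by
    intro τ hτ
    have hFTC : ∫ s in (0:ℝ)..τ, w' s = u' τ - u' 0 := by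
      apply intervalIntegral.integral_eq_sub_of_hasDeriv_right_of_le hτ.1
        (hu'c.continuousOn) ?_ (hw'c.intervalIntegrable 0 τ)
      intro x hx
      have hxI : x ∈ Set.Icc (0:ℝ) T := ⟨hx.1.le, hx.2.le.trans hτ.2⟩
      have hxT : x < T := lt_of_lt_of_le hx.2 hτ.2
      refine (hder' x hxI).mono_of_mem_nhdsWithin ?_
      have h1 : Set.Iio T ∈ nhdsWithin x (Set.Ioi x) :=
        mem_nhdsWithin_of_mem_nhds (Iio_mem_nhds hxT)
      filter_upwards [h1, self_mem_nhdsWithin] with y hy1 hy2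
      exact ⟨hx.1.le.trans (le_of_lt hy2), hy1.le⟩
    rw [hu'0] at hFTC
    rw [hFTC]
    abel
  set φ : ℝ → ℝ := fun τ => ‖w τ - w' τ‖ with hφ
  have hφc : Continuous φ := (hwcont.sub hw'c).norm
  have hφ0 : ∀ τ, 0 ≤ φ τ := fun τ => norm_nonneg _
  have hφb : ∀ τ ∈ Set.Icc (0:ℝ) T, φ τ ≤ Cst * ∫ s in (0:ℝ)..τ, φ s := by
    intro τ hτ
    obtain ⟨hwK, hwVI⟩ := hsolprop τ hτ
    obtain ⟨hw'K, hw'VI⟩ := hprop' τ hτ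
    have h₁ : ∀ v ∈ K, ⟪(f τ - B (u τ) - S w τ) - A (w τ), v - w τ⟫
        ≤ j (R w τ) v - j (R w τ) (w τ) := by
      intro v hv
      have h := hwVI v hv
      rw [show f τ - B (u τ) - S w τ - A (w τ) = f τ - A (w τ) - B (u τ) - S w τ by abel]
      linarith
    have h₂ : ∀ v ∈ K, ⟪(f τ - B (u' τ) - S w' τ) - A (w' τ), v - w' τ⟫
        ≤ j (R w' τ) v - j (R w' τ) (w' τ) := by
      intro v hv
      have h := hw'VI v hv
      rw [show f τ - B (u' τ) - S w' τ - A (w' τ) = f τ - A (w' τ) - B (u' τ) - S w' τ by abel]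
      linarith
    have hstab := aux_stab hmA hAmono hwK hw'K h₁ h₂ (mul_nonneg hαj (norm_nonneg _))
      (hjb (R w τ) (R w' τ) _ hwK _ hw'K)
    refine hstab.trans (hdata w w' hwcont hw'c τ hτ (u τ) (u' τ) ?_)
    rw [hu'rep τ hτ]
    have h2 := hInt w w' hwcont hw'c τ hτ.1
    calc ‖u τ - (u₀ + ∫ s in (0:ℝ)..τ, w' s)‖
        = ‖(∫ s in (0:ℝ)..τ, w s) - ∫ s in (0:ℝ)..τ, w' s‖ := by
          rw [hu]
          dsimp only
          rw [add_sub_add_left_eq_sub]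
      _ ≤ _ := h2
  have hzero := aux_gronwall hT hCst0 hφc hφ0 hφb
  have hEq : Set.EqOn w' w (Set.uIcc (0:ℝ) t) := by
    rw [Set.uIcc_of_le ht.1]
    intro s hs
    have h1 := hzero s ⟨hs.1, hs.2.trans ht.2⟩
    have h2 : w s - w' s = 0 := by
      rw [hφ] at h1
      exact norm_eq_zero.mp h1
    exact (sub_eq_zero.mp h2).symm
  rw [hu'rep t ht, intervalIntegral.integral_congr hEq, hu]
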